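/- Let Λ be a continuous linear functional on C([0,1],ℂ), E = ker Λ, F = {u ∈ C¹([0,1],ℂ) : Λu = 0 and Λu′ = 0}, and T : F → E the derivation Tu = u′. For ζ ∈ ℂ, the operator ζ·ι − T : F → E fails to be bijective with continuous inverse if and only if Λ(h_ζ) = 0, where h_ζ(x) = e^{ζx}. -/

import Mathlib

open Set Filter Topology

/-- `u` is continuously differentiable on `[0,1]` with derivative `w`. -/
def DerivOn (u w : C(↥(Set.Icc (0:ℝ) 1), ℂ)) : Prop :=
  ∀ x (hx : x ∈ Set.Icc (0:ℝ) 1),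
    HasDerivWithinAt (fun t : ℝ => u (Set.projIcc 0 1 zero_le_one t))
      (w ⟨x, hx⟩) (Set.Icc 0 1) x

/-- The exponential `h_ζ : x ↦ e^{ζx}` as an element of `C([0,1],ℂ)`. -/
noncomputable def expCM (ζ : ℂ) : C(↥(Set.Icc (0:ℝ) 1), ℂ) :=
  ⟨fun x => Complex.exp (ζ * (x : ℝ)), by fun_prop⟩

namespace Stmt12
noncomputable section

def extf (f : C(↥(Icc (0:ℝ) 1), ℂ)) : ℝ → ℂ := fun t => f (projIcc 0 1 zero_le_one t)

lemma extf_cont (f : C(↥(Icc (0:ℝ) 1), ℂ)) : Continuous (extf f) :=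
  f.continuous.comp continuous_projIcc

lemma extf_eq (f : C(↥(Icc (0:ℝ) 1), ℂ)) {x : ℝ} (hx : x ∈ Icc (0:ℝ) 1) :
    extf f x = f ⟨x, hx⟩ := by rw [extf, projIcc_of_mem zero_le_one hx]

lemma norm_extf_le (f : C(↥(Icc (0:ℝ) 1), ℂ)) (t : ℝ) : ‖extf f t‖ ≤ ‖f‖ :=
  f.norm_coe_le_norm _

lemma norm_exp_le (z : ℂ) {x : ℝ} (hx : x ∈ Icc (0:ℝ) 1) :
    ‖Complex.exp (z * x)‖ ≤ Real.exp ‖z‖ := by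
  rw [Complex.norm_exp]
  apply Real.exp_le_exp.2
  have : (z * (x:ℂ)).re = z.re * x := by simp
  rw [this]
  calc z.re * x ≤ |z.re * x| := le_abs_self _
    _ = |z.re| * |x| := abs_mul _ _
    _ ≤ ‖z‖ * 1 := by
        apply mul_le_mul (Complex.abs_re_le_norm z) _ (abs_nonneg _) (norm_nonneg _)
        rw [_root_.abs_of_nonneg hx.1]; exact hx.2
    _ = ‖z‖ := mul_one _

def gI (ζ : ℂ) (f : C(↥(Icc (0:ℝ) 1), ℂ)) : ℝ → ℂ :=
  fun x => ∫ t in (0:ℝ)..x, Complex.exp (-ζ * t) * extf f t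

lemma gI_hasDerivAt (ζ : ℂ) (f : C(↥(Icc (0:ℝ) 1), ℂ)) (x : ℝ) :
    HasDerivAt (gI ζ f) (Complex.exp (-ζ * x) * extf f x) x :=
  ((Continuous.mul (by fun_prop) (extf_cont f)).integral_hasStrictDerivAt 0 x).hasDerivAt

lemma gI_cont (ζ : ℂ) (f : C(↥(Icc (0:ℝ) 1), ℂ)) : Continuous (gI ζ f) :=
  continuous_iff_continuousAt.2 fun x => (gI_hasDerivAt ζ f x).continuousAt

lemma norm_gI_le (ζ : ℂ) (f : C(↥(Icc (0:ℝ) 1), ℂ)) {x : ℝ} (hx : x ∈ Icc (0:ℝ) 1) :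
    ‖gI ζ f x‖ ≤ Real.exp ‖ζ‖ * ‖f‖ := by
  have h := intervalIntegral.norm_integral_le_of_norm_le_const
    (a := 0) (b := x) (C := Real.exp ‖ζ‖ * ‖f‖)
    (f := fun t => Complex.exp (-ζ * t) * extf f t) ?_
  · calc ‖gI ζ f x‖ ≤ Real.exp ‖ζ‖ * ‖f‖ * |x - 0| := h
      _ ≤ Real.exp ‖ζ‖ * ‖f‖ * 1 := by
          apply mul_le_mul_of_nonneg_left _ (by positivity)
          rw [sub_zero, _root_.abs_of_nonneg hx.1]; exact hx.2
      _ = _ := mul_one _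
  · intro t ht
    rw [Set.uIoc_of_le hx.1] at ht
    have ht' : t ∈ Icc (0:ℝ) 1 := ⟨le_of_lt ht.1, ht.2.trans hx.2⟩
    rw [norm_mul]
    exact mul_le_mul (by simpa using norm_exp_le (-ζ) ht') (norm_extf_le f t)
      (norm_nonneg _) (Real.exp_nonneg _)

lemma expz_hasDerivAt (z : ℂ) (x : ℝ) :
    HasDerivAt (fun t : ℝ => Complex.exp (z * t)) (z * Complex.exp (z * x)) x := by
  have h : HasDerivAt (fun t : ℝ => z * (t:ℂ)) z x := by
    simpa using (Complex.ofRealCLM.hasDerivAt (x := x)).const_mul z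
  simpa [mul_comm] using h.cexp

def Usol (ζ : ℂ) (f : C(↥(Icc (0:ℝ) 1), ℂ)) (c : ℂ) : ℝ → ℂ :=
  fun x => Complex.exp (ζ * x) * (c - gI ζ f x)

lemma Usol_hasDerivAt (ζ : ℂ) (f : C(↥(Icc (0:ℝ) 1), ℂ)) (c : ℂ) (x : ℝ) :
    HasDerivAt (Usol ζ f c) (ζ * Usol ζ f c x - extf f x) x := by
  have hinv : Complex.exp (ζ * x) * Complex.exp (-ζ * x) = 1 := by
    rw [← Complex.exp_add]; ring_nf; exact Complex.exp_zero
  have h := (expz_hasDerivAt ζ x).mul ((hasDerivAt_const x c).sub (gI_hasDerivAt ζ f x))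
  convert h using 1
  · exact rfl
  · exact rfl
  unfold Usol
  simp only [Pi.sub_apply]
  linear_combination extf f x * hinv

lemma Usol_cont (ζ : ℂ) (f : C(↥(Icc (0:ℝ) 1), ℂ)) (c : ℂ) : Continuous (Usol ζ f c) :=
  (Complex.continuous_exp.comp (by fun_prop)).mul (continuous_const.sub (gI_cont ζ f))

def uCM (ζ : ℂ) (f : C(↥(Icc (0:ℝ) 1), ℂ)) (c : ℂ) : C(↥(Icc (0:ℝ) 1), ℂ) :=
  ⟨fun x => Usol ζ f c x, (Usol_cont ζ f c).comp continuous_subtype_val⟩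

lemma uCM_ext_eq (ζ : ℂ) (f : C(↥(Icc (0:ℝ) 1), ℂ)) (c : ℂ) {t : ℝ}
    (ht : t ∈ Icc (0:ℝ) 1) :
    uCM ζ f c (projIcc 0 1 zero_le_one t) = Usol ζ f c t := by
  rw [projIcc_of_mem zero_le_one ht]; rfl

lemma derivOn_uCM (ζ : ℂ) (f : C(↥(Icc (0:ℝ) 1), ℂ)) (c : ℂ) :
    DerivOn (uCM ζ f c) (ζ • uCM ζ f c - f) := by
  intro x hx
  have h := (Usol_hasDerivAt ζ f c x).hasDerivWithinAt (s := Icc (0:ℝ) 1)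
  have h2 : (ζ • uCM ζ f c - f) ⟨x, hx⟩ = ζ * Usol ζ f c x - extf f x := by
    rw [ContinuousMap.sub_apply, ContinuousMap.smul_apply, extf_eq f hx, smul_eq_mul]
    rfl
  rw [h2]
  exact h.congr (fun t ht => uCM_ext_eq ζ f c ht) (uCM_ext_eq ζ f c hx)

lemma hg_cont (ζ : ℂ) (f : C(↥(Icc (0:ℝ) 1), ℂ)) :
    Continuous (fun x : ℝ => Complex.exp (ζ * x) * gI ζ f x) :=
  (Complex.continuous_exp.comp (by fun_prop)).mul (gI_cont ζ f)

def hgCM (ζ : ℂ) (f : C(↥(Icc (0:ℝ) 1), ℂ)) : C(↥(Icc (0:ℝ) 1), ℂ) :=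
  ⟨fun x => Complex.exp (ζ * (x:ℝ)) * gI ζ f x, (hg_cont ζ f).comp continuous_subtype_val⟩

lemma uCM_eq_comb (ζ : ℂ) (f : C(↥(Icc (0:ℝ) 1), ℂ)) (c : ℂ) :
    uCM ζ f c = c • expCM ζ - hgCM ζ f := by
  ext x
  simp [uCM, hgCM, expCM, Usol]
  ring

lemma homog_zero (Λ : C(↥(Icc (0:ℝ) 1), ℂ) →L[ℂ] ℂ) (ζ : ℂ)
    (hne : Λ (expCM ζ) ≠ 0) (v w : C(↥(Icc (0:ℝ) 1), ℂ))
    (hD : DerivOn v w) (hΛ : Λ v = 0) (heq : ζ • v - w = 0) : v = 0 := by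
  have hw : w = ζ • v := (sub_eq_zero.1 heq).symm
  set φ : ℝ → ℂ := fun t => Complex.exp (-ζ * t) * extf v t with hφ
  have hφd : ∀ x ∈ Icc (0:ℝ) 1, HasDerivWithinAt φ 0 (Icc (0:ℝ) 1) x := by
    intro x hx
    have he := (expz_hasDerivAt (-ζ) x).hasDerivWithinAt (s := Icc (0:ℝ) 1)
    have hv := hD x hx
    have hv' : HasDerivWithinAt (extf v) (ζ * v ⟨x, hx⟩) (Icc (0:ℝ) 1) x := by
      have hwv : w ⟨x, hx⟩ = ζ * v ⟨x, hx⟩ := by rw [hw]; simp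
      rw [← hwv]; exact hv
    have hmul := he.mul hv'
    convert hmul using 1
    · exact rfl
    · exact rfl
    rw [extf_eq v hx]
    ring
  have hconst : ∀ y ∈ Icc (0:ℝ) 1, φ y = φ 0 := by
    intro y hy
    have h0 : (0:ℝ) ∈ Icc (0:ℝ) 1 := ⟨le_refl 0, zero_le_one⟩
    have hle := (convex_Icc (0:ℝ) 1).norm_image_sub_le_of_norm_hasDerivWithin_le
      (f := φ) (f' := fun _ => 0) (C := 0) hφd (fun x _ => by simp) h0 hy
    rw [zero_mul] at hle
    exact sub_eq_zero.1 (norm_le_zero_iff.1 hle)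
  have h0mem : (0:ℝ) ∈ Icc (0:ℝ) 1 := ⟨le_refl 0, zero_le_one⟩
  have hv0 : φ 0 = v ⟨0, h0mem⟩ := by
    simp [hφ, extf_eq v h0mem]
  have hvy : ∀ (y : ↥(Icc (0:ℝ) 1)), v y = Complex.exp (ζ * y) * v ⟨0, h0mem⟩ := by
    rintro ⟨y, hy⟩
    have h1 := hconst y hy
    rw [hv0, hφ] at h1
    have hinv : Complex.exp (ζ * y) * Complex.exp (-ζ * y) = 1 := by
      rw [← Complex.exp_add]; ring_nf; exact Complex.exp_zero
    have h2 := congrArg (fun z => Complex.exp (ζ * y) * z) h1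
    simp only at h2
    rw [← mul_assoc, hinv, one_mul, extf_eq v hy] at h2
    simpa using h2
  have hveq : v = v ⟨0, h0mem⟩ • expCM ζ := by
    ext y
    rw [hvy y, ContinuousMap.smul_apply, smul_eq_mul]
    show _ = v ⟨0, h0mem⟩ * Complex.exp (ζ * (y:ℝ))
    ring
  rw [hveq] at hΛ
  rw [map_smul, smul_eq_mul] at hΛ
  rcases mul_eq_zero.1 hΛ with h | h
  · rw [hveq, h]; exact zero_smul ℂ (expCM ζ)
  · exact absurd h hne

lemma Lambda_uCM (Λ : C(↥(Icc (0:ℝ) 1), ℂ) →L[ℂ] ℂ) (ζ : ℂ)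
    (f : C(↥(Icc (0:ℝ) 1), ℂ)) (hne : Λ (expCM ζ) ≠ 0) :
    Λ (uCM ζ f (Λ (hgCM ζ f) / Λ (expCM ζ))) = 0 := by
  rw [uCM_eq_comb, map_sub, map_smul, smul_eq_mul, div_mul_cancel₀ _ hne, sub_self]

lemma exists_unique_sol (Λ : C(↥(Icc (0:ℝ) 1), ℂ) →L[ℂ] ℂ) (ζ : ℂ)
    (hne : Λ (expCM ζ) ≠ 0) (f : C(↥(Icc (0:ℝ) 1), ℂ)) (hf : Λ f = 0) :
    ∃! u, ∃ u', DerivOn u u' ∧ Λ u = 0 ∧ Λ u' = 0 ∧ ζ • u - u' = f := by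
  set c := Λ (hgCM ζ f) / Λ (expCM ζ) with hc
  refine ⟨uCM ζ f c, ⟨ζ • uCM ζ f c - f, derivOn_uCM ζ f c,
    Lambda_uCM Λ ζ f hne, ?_, sub_sub_cancel _ _⟩, ?_⟩
  · rw [map_sub, map_smul, Lambda_uCM Λ ζ f hne, hf, smul_zero, sub_zero]
  · rintro u ⟨u', hD, hu, hu', heq⟩
    have hDdiff : DerivOn (u - uCM ζ f c) (u' - (ζ • uCM ζ f c - f)) := by
      intro x hx
      have h1 := hD x hx
      have h2 := derivOn_uCM ζ f c x hx
      have h3 : (u' - (ζ • uCM ζ f c - f)) ⟨x, hx⟩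
          = u' ⟨x, hx⟩ - (ζ • uCM ζ f c - f) ⟨x, hx⟩ := rfl
      rw [h3]
      exact (h1.sub h2).congr (fun t ht => by simp) (by simp)
    have hz : ζ • (u - uCM ζ f c) - (u' - (ζ • uCM ζ f c - f)) = 0 := by
      have h4 : ζ • (u - uCM ζ f c) - (u' - (ζ • uCM ζ f c - f))
          = (ζ • u - u') - f := by
        rw [smul_sub]; abel
      rw [h4, heq, sub_self]
    have hΛdiff : Λ (u - uCM ζ f c) = 0 := by
      rw [map_sub, hu, Lambda_uCM Λ ζ f hne, sub_zero]
    exact sub_eq_zero.1 (homog_zero Λ ζ hne _ _ hDdiff hΛdiff hz)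

lemma norm_uCM_le (Λ : C(↥(Icc (0:ℝ) 1), ℂ) →L[ℂ] ℂ) (ζ : ℂ)
    (f : C(↥(Icc (0:ℝ) 1), ℂ)) (hne : Λ (expCM ζ) ≠ 0) :
    ‖uCM ζ f (Λ (hgCM ζ f) / Λ (expCM ζ))‖ ≤
      (Real.exp ‖ζ‖ * (‖Λ‖ * (Real.exp ‖ζ‖ * Real.exp ‖ζ‖) / ‖Λ (expCM ζ)‖
        + Real.exp ‖ζ‖)) * ‖f‖ := by
  set K := Real.exp ‖ζ‖ with hK
  have hK0 : 0 < K := Real.exp_pos _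
  have hL0 : 0 < ‖Λ (expCM ζ)‖ := norm_pos_iff.2 hne
  have hhg : ‖hgCM ζ f‖ ≤ K * (K * ‖f‖) := by
    apply (ContinuousMap.norm_le _ (by positivity)).2
    intro x
    show ‖Complex.exp (ζ * (x:ℝ)) * gI ζ f x‖ ≤ K * (K * ‖f‖)
    rw [norm_mul]
    exact mul_le_mul (norm_exp_le ζ x.2) (norm_gI_le ζ f x.2) (norm_nonneg _) hK0.le
  have hc : ‖Λ (hgCM ζ f) / Λ (expCM ζ)‖
      ≤ ‖Λ‖ * (K * (K * ‖f‖)) / ‖Λ (expCM ζ)‖ := by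
    rw [norm_div]
    exact (div_le_div_iff_of_pos_right hL0).2 ((Λ.le_opNorm _).trans
      (mul_le_mul_of_nonneg_left hhg (norm_nonneg _)))
  apply (ContinuousMap.norm_le _ (by positivity)).2
  intro x
  show ‖Complex.exp (ζ * (x:ℝ)) * (Λ (hgCM ζ f) / Λ (expCM ζ) - gI ζ f x)‖ ≤ _
  rw [norm_mul]
  have h1 : ‖Λ (hgCM ζ f) / Λ (expCM ζ) - gI ζ f x‖
      ≤ ‖Λ‖ * (K * (K * ‖f‖)) / ‖Λ (expCM ζ)‖ + K * ‖f‖ :=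
    (norm_sub_le _ _).trans (add_le_add hc (norm_gI_le ζ f x.2))
  calc ‖Complex.exp (ζ * (x:ℝ))‖ * ‖Λ (hgCM ζ f) / Λ (expCM ζ) - gI ζ f x‖
      ≤ K * (‖Λ‖ * (K * (K * ‖f‖)) / ‖Λ (expCM ζ)‖ + K * ‖f‖) :=
        mul_le_mul (norm_exp_le ζ x.2) h1 (norm_nonneg _) hK0.le
    _ = (K * (‖Λ‖ * (K * K) / ‖Λ (expCM ζ)‖ + K)) * ‖f‖ := by ring

end
end Stmt12


set_option synthInstance.maxHeartbeats 1000000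

open Stmt12

/-- For a continuous linear functional `Λ` on `C([0,1],ℂ)`, with `E = ker Λ`,
`F = {u ∈ C¹ : Λu = 0, Λu' = 0}` and `T` the derivation, the operator
`ζ·ι - T : F → E` fails to be bijective with continuous inverse iff
`Λ(h_ζ) = 0`. -/
theorem stmt_12 (Λ : C(↥(Set.Icc (0:ℝ) 1), ℂ) →L[ℂ] ℂ) (ζ : ℂ) :
    (¬ ((∀ f, Λ f = 0 → ∃! u, ∃ u',
          DerivOn u u' ∧ Λ u = 0 ∧ Λ u' = 0 ∧ ζ • u - u' = f) ∧
        (∃ C : ℝ, ∀ f u, Λ f = 0 →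
          (∃ u', DerivOn u u' ∧ Λ u = 0 ∧ Λ u' = 0 ∧ ζ • u - u' = f) →
          ‖u‖ ≤ C * ‖f‖)))
    ↔ Λ (expCM ζ) = 0 := by
  constructor
  · intro hnP
    by_contra hne
    apply hnP
    constructor
    · exact exists_unique_sol Λ ζ hne
    · refine ⟨Real.exp ‖ζ‖ * (‖Λ‖ * (Real.exp ‖ζ‖ * Real.exp ‖ζ‖) / ‖Λ (expCM ζ)‖
        + Real.exp ‖ζ‖), ?_⟩
      intro f u hf hsol
      have hu : u = uCM ζ f (Λ (hgCM ζ f) / Λ (expCM ζ)) := by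
        refine (exists_unique_sol Λ ζ hne f hf).unique hsol
          ⟨ζ • uCM ζ f (Λ (hgCM ζ f) / Λ (expCM ζ)) - f, derivOn_uCM ζ f _,
            Lambda_uCM Λ ζ f hne, ?_, sub_sub_cancel _ _⟩
        rw [map_sub, map_smul, Lambda_uCM Λ ζ f hne, hf, smul_zero, sub_zero]
      rw [hu]
      exact norm_uCM_le Λ ζ f hne
  · intro hΛh hP
    obtain ⟨hexu, -⟩ := hP
    have h0mem : (0:ℝ) ∈ Set.Icc (0:ℝ) 1 := ⟨le_refl 0, zero_le_one⟩
    have hsol0 : ∃ u', DerivOn (0 : C(↥(Set.Icc (0:ℝ) 1), ℂ)) u' ∧ Λ 0 = 0 ∧ Λ u' = 0 ∧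
        ζ • (0 : C(↥(Set.Icc (0:ℝ) 1), ℂ)) - u' = 0 := by
      refine ⟨0, ?_, map_zero Λ, map_zero Λ, by ext x; simp⟩
      intro x hx
      simpa using hasDerivWithinAt_const x (Set.Icc (0:ℝ) 1) (0:ℂ)
    have hsolh : ∃ u', DerivOn (expCM ζ) u' ∧ Λ (expCM ζ) = 0 ∧ Λ u' = 0 ∧
        ζ • expCM ζ - u' = 0 := by
      refine ⟨ζ • expCM ζ, ?_, hΛh, by rw [map_smul, hΛh, smul_zero], sub_self _⟩
      intro x hx
      have h := (expz_hasDerivAt ζ x).hasDerivWithinAt (s := Set.Icc (0:ℝ) 1)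
      have hval : (ζ • expCM ζ) ⟨x, hx⟩ = ζ * Complex.exp (ζ * x) := by
        rw [ContinuousMap.smul_apply, smul_eq_mul]; rfl
      rw [hval]
      refine h.congr (fun t ht => ?_) ?_
      · rw [Set.projIcc_of_mem zero_le_one ht]; rfl
      · rw [Set.projIcc_of_mem zero_le_one hx]; rfl
    have := (hexu 0 (map_zero Λ)).unique hsolh hsol0
    have h1 := congrFun (congrArg DFunLike.coe this) ⟨0, h0mem⟩
    simp [expCM] at h1
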